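/- arXiv:2003.12964 — 2 statements merged into one kernel-verified Lean document; each statement's English description precedes it below -/
import Mathlib

section
/- Let X be a T_4 space (normal and Hausdorff). A subset M of B_1*(X) is a maximal ideal of B_1*(X) if and only if there exists p ∈ M(B_1(X)) such that M = {f ∈ B_1*(X) : f̂(p) = 0}, where f̂ is the unique continuous real-valued function on M(B_1(X)) with f̂ ∘ ψ = f. Moreover, distinct points p ≠ q of M(B_1(X)) yield distinct maximal ideals, and the maximal ideal {f ∈ B_1*(X) : f̂(p) = 0} is fixed if and only if p = M_x for some x ∈ X. -/
open Filter Topology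

/-- The ring of Baire one (pointwise limits of sequences of continuous) real-valued
functions on a topological space, as a subring of `X → ℝ`. -/
def baireOne (X : Type*) [TopologicalSpace X] : Subring (X → ℝ) where
  carrier := {f | ∃ F : ℕ → C(X, ℝ), ∀ x, Tendsto (fun n => F n x) atTop (𝓝 (f x))}
  zero_mem' := ⟨fun _ => 0, fun x => by simpa using tendsto_const_nhds⟩
  one_mem' := ⟨fun _ => 1, fun x => by simpa using tendsto_const_nhds⟩
  add_mem' := by
    rintro f g ⟨F, hF⟩ ⟨G, hG⟩
    exact ⟨fun n => F n + G n, fun x => by simpa using (hF x).add (hG x)⟩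
  mul_mem' := by
    rintro f g ⟨F, hF⟩ ⟨G, hG⟩
    exact ⟨fun n => F n * G n, fun x => by simpa using (hF x).mul (hG x)⟩
  neg_mem' := by
    rintro f ⟨F, hF⟩
    exact ⟨fun n => -F n, fun x => by simpa using (hF x).neg⟩
/-- The subring of bounded Baire one real-valued functions. -/
def baireOneStar (X : Type*) [TopologicalSpace X] : Subring (X → ℝ) where
  carrier := {f | f ∈ baireOne X ∧ ∃ C : ℝ, ∀ x, |f x| ≤ C}
  zero_mem' := ⟨(baireOne X).zero_mem, 0, by simp⟩
  one_mem' := ⟨(baireOne X).one_mem, 1, by simp⟩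
  add_mem' := by
    rintro f g ⟨hf, C, hC⟩ ⟨hg, D, hD⟩
    exact ⟨(baireOne X).add_mem hf hg, C + D, fun x =>
      (abs_add_le _ _).trans (add_le_add (hC x) (hD x))⟩
  mul_mem' := by
    rintro f g ⟨hf, C, hC⟩ ⟨hg, D, hD⟩
    refine ⟨(baireOne X).mul_mem hf hg, C * D, fun x => ?_⟩
    rw [Pi.mul_apply, abs_mul]
    exact mul_le_mul (hC x) (hD x) (abs_nonneg _) ((abs_nonneg _).trans (hC x))
  neg_mem' := by
    rintro f ⟨hf, C, hC⟩
    exact ⟨(baireOne X).neg_mem hf, C, fun x => by simpa using hC x⟩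
/-- The structure space of a commutative ring: the set of its maximal ideals. -/
def StructSpace (R : Type*) [CommRing R] : Type _ := {I : Ideal R // I.IsMaximal}

/-- The hull-kernel topology on the structure space, whose closed sets are generated by
the base `{M | f ∈ M}`, `f ∈ R`. -/
instance (R : Type*) [CommRing R] : TopologicalSpace (StructSpace R) :=
  TopologicalSpace.generateFrom {U : Set (StructSpace R) | ∃ f : R, U = {M | f ∉ M.1}}

section Aux

theorem baireOne_comp {X : Type*} [TopologicalSpace X] {f : X → ℝ} (hf : f ∈ baireOne X)
    {w : ℝ → ℝ} (hw : Continuous w) : (fun x => w (f x)) ∈ baireOne X := by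
  obtain ⟨F, hF⟩ := hf
  exact ⟨fun n => ⟨fun x => w (F n x), hw.comp (F n).continuous⟩,
    fun x => (hw.tendsto _).comp (hF x)⟩

/-- the constant function as an element of `baireOneStar`. -/
def bconst {X : Type*} [TopologicalSpace X] (c : ℝ) : ↥(baireOneStar X) :=
  ⟨fun _ => c, ⟨⟨fun _ => ContinuousMap.const X c, fun x => by simpa using tendsto_const_nhds⟩,
    |c|, fun _ => le_refl _⟩⟩

theorem structSpace_one_not_mem {R : Type*} [CommRing R] (p : StructSpace R) : (1 : R) ∉ p.1 :=
  (Ideal.ne_top_iff_one p.1).mp p.2.ne_top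

instance structSpace_compact (R : Type*) [CommRing R] : CompactSpace (StructSpace R) := by
  constructor
  rw [isCompact_iff_ultrafilter_le_nhds]
  intro F _
  let J : Ideal R :=
    { carrier := {f : R | {M : StructSpace R | f ∈ M.1} ∈ F}
      add_mem' := fun ha hb => Filter.mem_of_superset (Filter.inter_mem ha hb)
        (fun M hM => M.1.add_mem hM.1 hM.2)
      zero_mem' := Filter.mem_of_superset Filter.univ_mem (fun M _ => M.1.zero_mem)
      smul_mem' := fun c x hx => Filter.mem_of_superset hx
        (fun M hM => M.1.smul_mem c hM) }
  have hJtop : J ≠ ⊤ := by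
    intro h
    have h1 : (1 : R) ∈ J := h ▸ Submodule.mem_top
    have : {M : StructSpace R | (1 : R) ∈ M.1} ∈ F := h1
    have hempty : {M : StructSpace R | (1 : R) ∈ M.1} = ∅ := by
      ext M; simpa using structSpace_one_not_mem M
    rw [hempty] at this
    exact Ultrafilter.empty_notMem this
  obtain ⟨m, hm, hJm⟩ := Ideal.exists_le_maximal J hJtop
  refine ⟨⟨m, hm⟩, trivial, ?_⟩
  have key : ∀ s ∈ {s : Set (StructSpace R) | (⟨m, hm⟩ : StructSpace R) ∈ s ∧
      s ∈ {U : Set (StructSpace R) | ∃ f : R, U = {M | f ∉ M.1}}}, (F : Filter (StructSpace R)) ≤ 𝓟 s := by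
    rintro s ⟨hps, f, rfl⟩
    rw [Filter.le_principal_iff]
    rcases F.mem_or_compl_mem {M : StructSpace R | f ∉ M.1} with h | h
    · exact h
    · exfalso
      have hfJ : f ∈ J := by
        have : {M : StructSpace R | f ∈ M.1} ∈ F := by
          convert h using 1
          ext M; simp
        exact this
      exact hps (hJm hfJ)
  exact le_of_le_of_eq (le_iInf₂ key) (TopologicalSpace.nhds_generateFrom).symm

end Aux

section Main

variable {X : Type*} [TopologicalSpace X]

theorem exists_basic (ψ : X → StructSpace ↥(baireOne X))
    (hψ : ∀ x : X, ((ψ x).1 : Set ↥(baireOne X)) = {g : ↥(baireOne X) | (g : X → ℝ) x = 0})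
    (p : StructSpace ↥(baireOne X)) {U : Set (StructSpace ↥(baireOne X))}
    (hpU : p ∈ U) (hU : IsOpen U) :
    ∃ g : ↥(baireOne X), g ∉ p.1 ∧ ∀ x : X, (g : X → ℝ) x ≠ 0 → ψ x ∈ U := by
  classical
  have hbasis : TopologicalSpace.IsTopologicalBasis
      ((fun f => Set.sInter f) '' {f : Set (Set (StructSpace ↥(baireOne X))) |
        f.Finite ∧ f ⊆ {V | ∃ g : ↥(baireOne X), V = {M | g ∉ M.1}}}) :=
    TopologicalSpace.isTopologicalBasis_of_subbasis rfl
  obtain ⟨v, ⟨T, ⟨hTfin, hTsub⟩, rfl⟩, hpv, hvU⟩ := hbasis.exists_subset_of_mem_open hpU hU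
  haveI : Nonempty ↥(baireOne X) := ⟨1⟩
  have hTsub' : ∀ V, V ∈ T → ∃ g : ↥(baireOne X), V = {M | g ∉ M.1} :=
    fun V hV => hTsub hV
  choose! gf hgf using hTsub'
  refine ⟨∏ V ∈ hTfin.toFinset, gf V, ?_, ?_⟩
  · refine Finset.prod_induction _ (fun a => a ∉ p.1) ?_ (structSpace_one_not_mem p) ?_
    · intro a b ha hb hab
      exact ((p.2.isPrime.mem_or_mem hab).elim ha hb)
    · intro V hV
      have hVT : V ∈ T := hTfin.mem_toFinset.mp hV
      have := hpv V hVT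
      rw [hgf V hVT] at this
      exact this
  · intro x hx
    have hcoe : ((∏ V ∈ hTfin.toFinset, gf V : ↥(baireOne X)) : X → ℝ) x
        = ∏ V ∈ hTfin.toFinset, ((gf V : X → ℝ) x) := by
      have h1 := map_prod ((baireOne X).subtype) gf hTfin.toFinset
      have h2 := congrFun h1 x
      simpa using h2
    rw [hcoe] at hx
    apply hvU
    intro V hVT
    rw [hgf V hVT]
    intro hmem
    have hmem' : gf V ∈ ((ψ x).1 : Set ↥(baireOne X)) := hmem
    rw [hψ x] at hmem'
    exact (Finset.prod_ne_zero_iff.mp hx V (hTfin.mem_toFinset.mpr hVT)) hmem'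

theorem psi_dense (ψ : X → StructSpace ↥(baireOne X))
    (hψ : ∀ x : X, ((ψ x).1 : Set ↥(baireOne X)) = {g : ↥(baireOne X) | (g : X → ℝ) x = 0}) :
    Dense (Set.range ψ) := by
  rw [dense_iff_inter_open]
  rintro U hU ⟨M₀, hM₀⟩
  obtain ⟨g, hg, hgU⟩ := exists_basic ψ hψ M₀ hM₀ hU
  have hgne : ∃ x, (g : X → ℝ) x ≠ 0 := by
    by_contra h
    push_neg at h
    have hg0 : g = 0 := by
      apply Subtype.ext
      funext x
      simpa using h x
    exact hg (hg0 ▸ M₀.1.zero_mem)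
  obtain ⟨x, hx⟩ := hgne
  exact ⟨ψ x, hgU x hx, x, rfl⟩

end Main

section Hom

variable {X : Type*} [TopologicalSpace X]

theorem ext_unique (ψ : X → StructSpace ↥(baireOne X))
    (hψ : ∀ x : X, ((ψ x).1 : Set ↥(baireOne X)) = {g : ↥(baireOne X) | (g : X → ℝ) x = 0})
    {u v : StructSpace ↥(baireOne X) → ℝ} (hu : Continuous u) (hv : Continuous v)
    (h : ∀ x, u (ψ x) = v (ψ x)) : u = v :=
  Continuous.ext_on (psi_dense ψ hψ) hu hv (by rintro _ ⟨x, rfl⟩; exact h x)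

theorem ext_add (ψ : X → StructSpace ↥(baireOne X))
    (hψ : ∀ x : X, ((ψ x).1 : Set ↥(baireOne X)) = {g : ↥(baireOne X) | (g : X → ℝ) x = 0})
    (ext : ↥(baireOneStar X) → StructSpace ↥(baireOne X) → ℝ)
    (hext_cont : ∀ f : ↥(baireOneStar X), Continuous (ext f))
    (hext : ∀ (f : ↥(baireOneStar X)) (x : X), ext f (ψ x) = (f : X → ℝ) x)
    (f g : ↥(baireOneStar X)) :
    ext (f + g) = fun p => ext f p + ext g p :=
  ext_unique ψ hψ (hext_cont _) ((hext_cont f).add (hext_cont g)) fun x => by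
    rw [hext, hext, hext]; rfl

theorem ext_mul (ψ : X → StructSpace ↥(baireOne X))
    (hψ : ∀ x : X, ((ψ x).1 : Set ↥(baireOne X)) = {g : ↥(baireOne X) | (g : X → ℝ) x = 0})
    (ext : ↥(baireOneStar X) → StructSpace ↥(baireOne X) → ℝ)
    (hext_cont : ∀ f : ↥(baireOneStar X), Continuous (ext f))
    (hext : ∀ (f : ↥(baireOneStar X)) (x : X), ext f (ψ x) = (f : X → ℝ) x)
    (f g : ↥(baireOneStar X)) :
    ext (f * g) = fun p => ext f p * ext g p :=
  ext_unique ψ hψ (hext_cont _) ((hext_cont f).mul (hext_cont g)) fun x => by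
    rw [hext, hext, hext]; rfl

theorem ext_const (ψ : X → StructSpace ↥(baireOne X))
    (hψ : ∀ x : X, ((ψ x).1 : Set ↥(baireOne X)) = {g : ↥(baireOne X) | (g : X → ℝ) x = 0})
    (ext : ↥(baireOneStar X) → StructSpace ↥(baireOne X) → ℝ)
    (hext_cont : ∀ f : ↥(baireOneStar X), Continuous (ext f))
    (hext : ∀ (f : ↥(baireOneStar X)) (x : X), ext f (ψ x) = (f : X → ℝ) x)
    (c : ℝ) : ext (bconst c) = fun _ => c :=
  ext_unique ψ hψ (hext_cont _) continuous_const fun x => by rw [hext]; rfl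

/-- Evaluation of the extension at a point of the structure space, as a ring hom. -/
def extHom (ψ : X → StructSpace ↥(baireOne X))
    (hψ : ∀ x : X, ((ψ x).1 : Set ↥(baireOne X)) = {g : ↥(baireOne X) | (g : X → ℝ) x = 0})
    (ext : ↥(baireOneStar X) → StructSpace ↥(baireOne X) → ℝ)
    (hext_cont : ∀ f : ↥(baireOneStar X), Continuous (ext f))
    (hext : ∀ (f : ↥(baireOneStar X)) (x : X), ext f (ψ x) = (f : X → ℝ) x)
    (p : StructSpace ↥(baireOne X)) : ↥(baireOneStar X) →+* ℝ where
  toFun f := ext f p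
  map_one' := congrFun (ext_const ψ hψ ext hext_cont hext 1) p
  map_mul' f g := congrFun (ext_mul ψ hψ ext hext_cont hext f g) p
  map_zero' := congrFun (ext_const ψ hψ ext hext_cont hext 0) p
  map_add' f g := congrFun (ext_add ψ hψ ext hext_cont hext f g) p

theorem extHom_surj (ψ : X → StructSpace ↥(baireOne X))
    (hψ : ∀ x : X, ((ψ x).1 : Set ↥(baireOne X)) = {g : ↥(baireOne X) | (g : X → ℝ) x = 0})
    (ext : ↥(baireOneStar X) → StructSpace ↥(baireOne X) → ℝ)
    (hext_cont : ∀ f : ↥(baireOneStar X), Continuous (ext f))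
    (hext : ∀ (f : ↥(baireOneStar X)) (x : X), ext f (ψ x) = (f : X → ℝ) x)
    (p : StructSpace ↥(baireOne X)) :
    Function.Surjective (extHom ψ hψ ext hext_cont hext p) :=
  fun c => ⟨bconst c, congrFun (ext_const ψ hψ ext hext_cont hext c) p⟩

theorem extHom_ker_isMaximal (ψ : X → StructSpace ↥(baireOne X))
    (hψ : ∀ x : X, ((ψ x).1 : Set ↥(baireOne X)) = {g : ↥(baireOne X) | (g : X → ℝ) x = 0})
    (ext : ↥(baireOneStar X) → StructSpace ↥(baireOne X) → ℝ)
    (hext_cont : ∀ f : ↥(baireOneStar X), Continuous (ext f))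
    (hext : ∀ (f : ↥(baireOneStar X)) (x : X), ext f (ψ x) = (f : X → ℝ) x)
    (p : StructSpace ↥(baireOne X)) :
    (RingHom.ker (extHom ψ hψ ext hext_cont hext p)).IsMaximal :=
  RingHom.ker_isMaximal_of_surjective _ (extHom_surj ψ hψ ext hext_cont hext p)

end Hom

/-- The inclusion of bounded Baire one functions into Baire one functions. -/
def iota {X : Type*} [TopologicalSpace X] : ↥(baireOneStar X) →+* ↥(baireOne X) where
  toFun f := ⟨f.1, f.2.1⟩
  map_one' := rfl
  map_mul' _ _ := rfl
  map_zero' := rfl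
  map_add' _ _ := rfl

section WInv

theorem winv_cont (ε : ℝ) (hε : 0 < ε) : Continuous (fun t : ℝ => t / max (t ^ 2) (ε ^ 2)) := by
  apply Continuous.div continuous_id (by continuity)
  intro t
  exact ne_of_gt (lt_of_lt_of_le (by positivity) (le_max_right (t ^ 2) (ε ^ 2)))

theorem winv_bound (ε : ℝ) (hε : 0 < ε) (t : ℝ) : |t / max (t ^ 2) (ε ^ 2)| ≤ 1 / ε := by
  have hmaxpos : (0 : ℝ) < max (t ^ 2) (ε ^ 2) :=
    lt_of_lt_of_le (by positivity) (le_max_right _ _)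
  rw [abs_div, abs_of_pos hmaxpos, div_le_div_iff₀ hmaxpos hε]
  rcases le_total |t| ε with h | h
  · have h1 : |t| * ε ≤ ε ^ 2 := by nlinarith [abs_nonneg t]
    have h2 := le_max_right (t ^ 2) (ε ^ 2)
    linarith
  · have h1 : |t| * ε ≤ t ^ 2 := by nlinarith [sq_abs t]
    have h2 := le_max_left (t ^ 2) (ε ^ 2)
    linarith

theorem winv_mul (ε : ℝ) (hε : 0 < ε) (t : ℝ) (ht : ε ≤ |t|) :
    t * (t / max (t ^ 2) (ε ^ 2)) = 1 := by
  have h1 : max (t ^ 2) (ε ^ 2) = t ^ 2 :=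
    max_eq_left (by nlinarith [sq_abs t, abs_nonneg t])
  have ht0 : t ≠ 0 := by
    intro h
    rw [h, abs_zero] at ht
    linarith
  rw [h1]
  field_simp

end WInv

section Key

variable {X : Type*} [TopologicalSpace X]

theorem isUnit_of_bounded_below (m : ℝ) (hm : 0 < m) (f : ↥(baireOneStar X))
    (hf : ∀ x : X, m ≤ |(f : X → ℝ) x|) : IsUnit f := by
  refine IsUnit.of_mul_eq_one (a := f)
    ⟨fun x => (f : X → ℝ) x / max (((f : X → ℝ) x) ^ 2) (m ^ 2),
      baireOne_comp f.2.1 (winv_cont m hm), 1 / m, fun x => winv_bound m hm _⟩ ?_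
  apply Subtype.ext
  funext x
  exact winv_mul m hm _ (hf x)

theorem ext_eq_zero_of_mem (ψ : X → StructSpace ↥(baireOne X))
    (hψ : ∀ x : X, ((ψ x).1 : Set ↥(baireOne X)) = {g : ↥(baireOne X) | (g : X → ℝ) x = 0})
    (ext : ↥(baireOneStar X) → StructSpace ↥(baireOne X) → ℝ)
    (hext_cont : ∀ f : ↥(baireOneStar X), Continuous (ext f))
    (hext : ∀ (f : ↥(baireOneStar X)) (x : X), ext f (ψ x) = (f : X → ℝ) x)
    (p : StructSpace ↥(baireOne X)) (u : ↥(baireOneStar X)) (hu : iota u ∈ p.1) :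
    ext u p = 0 := by
  by_contra hc
  set ε : ℝ := |ext u p| / 2 with hεdef
  have hε : 0 < ε := div_pos (abs_pos.mpr hc) two_pos
  have hUopen : IsOpen {r : StructSpace ↥(baireOne X) | ε < |ext u r|} :=
    isOpen_lt continuous_const (hext_cont u).abs
  have hpU : p ∈ {r : StructSpace ↥(baireOne X) | ε < |ext u r|} := by
    have := abs_pos.mpr hc
    simp only [Set.mem_setOf_eq, hεdef]
    linarith
  obtain ⟨g, hgp, hgU⟩ := exists_basic ψ hψ p hpU hUopen
  have hpt : ∀ x : X, (g : X → ℝ) x ≠ 0 → ε < |(u : X → ℝ) x| := by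
    intro x hx
    have h := hgU x hx
    rwa [Set.mem_setOf_eq, hext] at h
  set v : ↥(baireOneStar X) :=
    ⟨fun x => (u : X → ℝ) x / max (((u : X → ℝ) x) ^ 2) (ε ^ 2),
      baireOne_comp u.2.1 (winv_cont ε hε), 1 / ε, fun x => winv_bound ε hε _⟩ with hvdef
  have hgz : g * (1 - iota u * iota v) = 0 := by
    apply Subtype.ext
    funext x
    show (g : X → ℝ) x * ((1 : ℝ) - (u : X → ℝ) x *
      ((u : X → ℝ) x / max (((u : X → ℝ) x) ^ 2) (ε ^ 2))) = 0
    by_cases hx : (g : X → ℝ) x = 0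
    · rw [hx, zero_mul]
    · rw [winv_mul ε hε _ (le_of_lt (hpt x hx))]
      ring
  have h0 : g * (1 - iota u * iota v) ∈ p.1 := by
    rw [hgz]; exact p.1.zero_mem
  rcases p.2.isPrime.mem_or_mem h0 with h | h
  · exact hgp h
  · have h2 : iota u * iota v ∈ p.1 := p.1.mul_mem_right _ hu
    have h3 : (1 : ↥(baireOne X)) ∈ p.1 := by
      have h4 := p.1.add_mem h h2
      simpa using h4
    exact structSpace_one_not_mem p h3

end Key

section Sep

variable {X : Type*} [TopologicalSpace X]

theorem sq_div_cont : Continuous (fun t : ℝ => t ^ 2 / (1 + t ^ 2)) := by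
  apply Continuous.div (by continuity) (by continuity)
  intro t; positivity

theorem mid_div_cont : Continuous (fun t : ℝ => t / (1 + t ^ 2)) := by
  apply Continuous.div continuous_id (by continuity)
  intro t; positivity

theorem aff_div_cont : Continuous (fun t : ℝ => (t + 1) / (2 * (1 + t ^ 2))) := by
  apply Continuous.div (by continuity) (by continuity)
  intro t; positivity

theorem squash_abs_le (t : ℝ) : |t ^ 2 / (1 + t ^ 2)| ≤ 1 := by
  have h0 : (0 : ℝ) ≤ t ^ 2 / (1 + t ^ 2) := by positivity
  have h1 : (0 : ℝ) < 1 + t ^ 2 := by positivity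
  rw [abs_of_nonneg h0, div_le_one h1]
  nlinarith [sq_nonneg t]

theorem squash_factor (t : ℝ) : t ^ 2 / (1 + t ^ 2) = t * (t / (1 + t ^ 2)) := by
  ring

theorem squash_half (t : ℝ) :
    t ^ 2 / (1 + t ^ 2) - 1 / 2 = (t - 1) * ((t + 1) / (2 * (1 + t ^ 2))) := by
  have h1 : (0 : ℝ) < 1 + t ^ 2 := by positivity
  field_simp
  ring

theorem ext_separates (ψ : X → StructSpace ↥(baireOne X))
    (hψ : ∀ x : X, ((ψ x).1 : Set ↥(baireOne X)) = {g : ↥(baireOne X) | (g : X → ℝ) x = 0})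
    (ext : ↥(baireOneStar X) → StructSpace ↥(baireOne X) → ℝ)
    (hext_cont : ∀ f : ↥(baireOneStar X), Continuous (ext f))
    (hext : ∀ (f : ↥(baireOneStar X)) (x : X), ext f (ψ x) = (f : X → ℝ) x)
    (p q : StructSpace ↥(baireOne X)) (hpq : p ≠ q) :
    ∃ f : ↥(baireOneStar X), ext f p ≠ 0 ∧ ext f q = 0 := by
  have hne : ¬(q.1 ≤ p.1) := by
    intro hle
    exact hpq (Subtype.ext (q.2.eq_of_le p.2.ne_top hle)).symm
  have hex : ∃ g, g ∈ q.1 ∧ g ∉ p.1 := by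
    by_contra hall
    push_neg at hall
    exact hne fun x hx => hall x hx
  obtain ⟨g, hgq, hgp⟩ := hex
  obtain ⟨h, c, hcp, hch⟩ := p.2.exists_inv hgp
  set w : ↥(baireOne X) := h * g with hwdef
  have hwq : w ∈ q.1 := q.1.mul_mem_left h hgq
  have hwp : w - 1 ∈ p.1 := by
    have he : w - 1 = -c := by rw [hwdef, ← hch, hwdef]; ring
    rw [he]
    exact p.1.neg_mem hcp
  set f : ↥(baireOneStar X) :=
    ⟨fun x => ((w : X → ℝ) x) ^ 2 / (1 + ((w : X → ℝ) x) ^ 2),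
      baireOne_comp w.2 sq_div_cont, 1, fun x => squash_abs_le _⟩ with hfdef
  set b : ↥(baireOne X) :=
    ⟨fun x => (w : X → ℝ) x / (1 + ((w : X → ℝ) x) ^ 2),
      baireOne_comp w.2 mid_div_cont⟩ with hbdef
  set b' : ↥(baireOne X) :=
    ⟨fun x => ((w : X → ℝ) x + 1) / (2 * (1 + ((w : X → ℝ) x) ^ 2)),
      baireOne_comp w.2 aff_div_cont⟩ with hb'def
  have hfq : ext f q = 0 := by
    apply ext_eq_zero_of_mem ψ hψ ext hext_cont hext q f
    have hfact : iota f = w * b := by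
      apply Subtype.ext
      funext x
      exact squash_factor _
    rw [hfact]
    exact q.1.mul_mem_right b hwq
  have hfp2 : ext (f - bconst (1 / 2)) p = 0 := by
    apply ext_eq_zero_of_mem ψ hψ ext hext_cont hext p _
    have hfact : iota (f - bconst (1 / 2)) = (w - 1) * b' := by
      apply Subtype.ext
      funext x
      exact squash_half _
    rw [hfact]
    exact p.1.mul_mem_right b' hwp
  have hsub : ext (f - bconst (1 / 2)) p = ext f p - ext (bconst (1 / 2)) p :=
    map_sub (extHom ψ hψ ext hext_cont hext p) f (bconst (1 / 2))
  have hcst : ext (bconst (1 / 2)) p = 1 / 2 :=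
    congrFun (ext_const ψ hψ ext hext_cont hext (1 / 2)) p
  refine ⟨f, ?_, hfq⟩
  rw [hsub, hcst] at hfp2
  intro h0
  rw [h0] at hfp2
  norm_num at hfp2

end Sep

/-- Description of the maximal ideals of `B₁*(X)` for a `T₄` space `X`: given the
extension operator `f ↦ f̂` along `ψ : x ↦ M_x`, a subset of `B₁*(X)` is a maximal ideal
iff it is `{f : f̂(p) = 0}` for some point `p` of the structure space of `B₁(X)`;
distinct points give distinct maximal ideals; and `{f : f̂(p) = 0}` is fixed iff
`p = M_x` for some `x ∈ X`. -/
theorem maximalIdeals_of_baireOneStar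
    (X : Type*) [TopologicalSpace X] [T4Space X]
    (ψ : X → StructSpace ↥(baireOne X))
    (hψ : ∀ x : X, ((ψ x).1 : Set ↥(baireOne X)) = {g : ↥(baireOne X) | (g : X → ℝ) x = 0})
    (ext : ↥(baireOneStar X) → StructSpace ↥(baireOne X) → ℝ)
    (hext_cont : ∀ f : ↥(baireOneStar X), Continuous (ext f))
    (hext : ∀ (f : ↥(baireOneStar X)) (x : X), ext f (ψ x) = (f : X → ℝ) x) :
    (∀ M : Set ↥(baireOneStar X),
        (∃ I : Ideal ↥(baireOneStar X), I.IsMaximal ∧ (I : Set ↥(baireOneStar X)) = M) ↔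
          ∃ p : StructSpace ↥(baireOne X), M = {f | ext f p = 0}) ∧
    (∀ p q : StructSpace ↥(baireOne X), p ≠ q →
        {f : ↥(baireOneStar X) | ext f p = 0} ≠ {f : ↥(baireOneStar X) | ext f q = 0}) ∧
    (∀ p : StructSpace ↥(baireOne X),
        (⋂ f ∈ {f : ↥(baireOneStar X) | ext f p = 0}, {x : X | (f : X → ℝ) x = 0}).Nonempty ↔
          ∃ x : X, ψ x = p) := by
  classical
  refine ⟨?_, ?_, ?_⟩
  · -- part 1
    intro M
    constructor
    · rintro ⟨I, hI, rfl⟩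
      have hIne : (1 : ↥(baireOneStar X)) ∉ I := fun h =>
        hI.ne_top (Ideal.eq_top_of_isUnit_mem I h isUnit_one)
      have hX : Nonempty X := by
        by_contra hXe
        apply hIne
        have h01 : (1 : ↥(baireOneStar X)) = 0 :=
          Subtype.ext (funext fun x => absurd (Nonempty.intro x) hXe)
        rw [h01]
        exact I.zero_mem
      haveI := hX
      haveI : Nonempty (StructSpace ↥(baireOne X)) := ⟨ψ (Classical.arbitrary X)⟩
      set Z : {f : ↥(baireOneStar X) // f ∈ I} → Set (StructSpace ↥(baireOne X)) :=
        fun f => ext f.1 ⁻¹' {0} with hZdef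
      have hZclosed : ∀ f, IsClosed (Z f) := fun f =>
        isClosed_singleton.preimage (hext_cont f.1)
      have hZcompact : ∀ f, IsCompact (Z f) := fun f => (hZclosed f).isCompact
      have hZne : ∀ f, (Z f).Nonempty := by
        intro f
        by_contra hne
        have hnz : ∀ p, ext f.1 p ≠ 0 := fun p hp => hne ⟨p, hp⟩
        obtain ⟨p₀, -, hmin⟩ := isCompact_univ.exists_isMinOn Set.univ_nonempty
          (hext_cont f.1).abs.continuousOn
        have hm : 0 < |ext f.1 p₀| := abs_pos.mpr (hnz p₀)
        have hbb : ∀ x : X, |ext f.1 p₀| ≤ |(f.1 : X → ℝ) x| := by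
          intro x
          have h := isMinOn_iff.mp hmin (ψ x) (Set.mem_univ _)
          rwa [hext] at h
        exact hI.ne_top (Ideal.eq_top_of_isUnit_mem I f.2
          (isUnit_of_bounded_below _ hm f.1 hbb))
      have hdir : Directed (· ⊇ ·) Z := by
        intro f g
        refine ⟨⟨f.1 * f.1 + g.1 * g.1,
          I.add_mem (I.mul_mem_left _ f.2) (I.mul_mem_left _ g.2)⟩, ?_, ?_⟩
        · intro p hp
          have hp0 : ext (f.1 * f.1 + g.1 * g.1) p = 0 := hp
          have he : ext (f.1 * f.1 + g.1 * g.1) p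
              = ext f.1 p * ext f.1 p + ext g.1 p * ext g.1 p := by
            show extHom ψ hψ ext hext_cont hext p (f.1 * f.1 + g.1 * g.1)
              = extHom ψ hψ ext hext_cont hext p f.1 * extHom ψ hψ ext hext_cont hext p f.1
                + extHom ψ hψ ext hext_cont hext p g.1 * extHom ψ hψ ext hext_cont hext p g.1
            rw [map_add, map_mul, map_mul]
          rw [he] at hp0
          have h1 : ext f.1 p * ext f.1 p = 0 := by
            nlinarith [mul_self_nonneg (ext f.1 p), mul_self_nonneg (ext g.1 p)]
          show ext f.1 p ∈ ({0} : Set ℝ)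
          exact mul_self_eq_zero.mp h1
        · intro p hp
          have hp0 : ext (f.1 * f.1 + g.1 * g.1) p = 0 := hp
          have he : ext (f.1 * f.1 + g.1 * g.1) p
              = ext f.1 p * ext f.1 p + ext g.1 p * ext g.1 p := by
            show extHom ψ hψ ext hext_cont hext p (f.1 * f.1 + g.1 * g.1)
              = extHom ψ hψ ext hext_cont hext p f.1 * extHom ψ hψ ext hext_cont hext p f.1
                + extHom ψ hψ ext hext_cont hext p g.1 * extHom ψ hψ ext hext_cont hext p g.1
            rw [map_add, map_mul, map_mul]
          rw [he] at hp0
          have h1 : ext g.1 p * ext g.1 p = 0 := by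
            nlinarith [mul_self_nonneg (ext f.1 p), mul_self_nonneg (ext g.1 p)]
          show ext g.1 p ∈ ({0} : Set ℝ)
          exact mul_self_eq_zero.mp h1
      obtain ⟨p, hp⟩ := IsCompact.nonempty_iInter_of_directed_nonempty_isCompact_isClosed
        Z hdir hZne hZcompact hZclosed
      refine ⟨p, ?_⟩
      have hle : I ≤ RingHom.ker (extHom ψ hψ ext hext_cont hext p) := by
        intro f hf
        have hmem : p ∈ Z ⟨f, hf⟩ := Set.mem_iInter.mp hp ⟨f, hf⟩
        exact RingHom.mem_ker.mpr hmem
      have heq : I = RingHom.ker (extHom ψ hψ ext hext_cont hext p) :=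
        hI.eq_of_le (extHom_ker_isMaximal ψ hψ ext hext_cont hext p).ne_top hle
      rw [heq]
      exact Set.ext fun f => by
        rw [SetLike.mem_coe, RingHom.mem_ker]
        exact Iff.rfl
    · rintro ⟨p, rfl⟩
      refine ⟨RingHom.ker (extHom ψ hψ ext hext_cont hext p),
        extHom_ker_isMaximal ψ hψ ext hext_cont hext p, ?_⟩
      exact Set.ext fun f => by
        rw [SetLike.mem_coe, RingHom.mem_ker]
        exact Iff.rfl
  · -- part 2
    intro p q hpq h
    obtain ⟨f, hfp, hfq⟩ := ext_separates ψ hψ ext hext_cont hext p q hpq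
    have hmem : f ∈ {f : ↥(baireOneStar X) | ext f q = 0} := hfq
    rw [← h] at hmem
    exact hfp hmem
  · -- part 3
    intro p
    constructor
    · rintro ⟨x, hx⟩
      refine ⟨x, ?_⟩
      by_contra hne
      have hsub : RingHom.ker (extHom ψ hψ ext hext_cont hext p)
          ≤ RingHom.ker (extHom ψ hψ ext hext_cont hext (ψ x)) := by
        intro f hf
        have hf0 : ext f p = 0 := RingHom.mem_ker.mp hf
        have hx0 : (f : X → ℝ) x = 0 := Set.mem_iInter₂.mp hx f hf0
        apply RingHom.mem_ker.mpr
        show ext f (ψ x) = 0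
        rw [hext]
        exact hx0
      have heq := (extHom_ker_isMaximal ψ hψ ext hext_cont hext p).eq_of_le
        (extHom_ker_isMaximal ψ hψ ext hext_cont hext (ψ x)).ne_top hsub
      obtain ⟨f, hfp, hfx⟩ := ext_separates ψ hψ ext hext_cont hext p (ψ x)
        (fun hh => hne hh.symm)
      have hmem : f ∈ RingHom.ker (extHom ψ hψ ext hext_cont hext (ψ x)) :=
        RingHom.mem_ker.mpr hfx
      rw [← heq] at hmem
      exact hfp (RingHom.mem_ker.mp hmem)
    · rintro ⟨x, rfl⟩
      refine ⟨x, Set.mem_iInter₂.mpr ?_⟩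
      intro f hf
      show (f : X → ℝ) x = 0
      rw [← hext f x]
      exact hf
end

section
/- Let (X, τ) be a compact T_4 space (compact, normal and Hausdorff). If there exists a Baire one function on (X, τ) that is not continuous, then B_1(X, τ) contains a free maximal ideal. -/
open Filter Topology

lemma continuous_mem_baireOne {X : Type*} [TopologicalSpace X] {u : X → ℝ}
    (hu : Continuous u) : u ∈ baireOne X :=
  ⟨fun _ => ⟨u, hu⟩, fun _ => tendsto_const_nhds⟩

/-- If `(X, τ)` is a compact `T₄` space admitting a non-continuous Baire one function,
then `B₁(X, τ)` contains a free maximal ideal. -/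
theorem exists_free_maximal_of_noncontinuous_baireOne
    (X : Type*) [TopologicalSpace X] [CompactSpace X] [T4Space X]
    (h : ∃ f ∈ baireOne X, ¬Continuous f) :
    ∃ M : Ideal ↥(baireOne X), M.IsMaximal ∧
      (⋂ f ∈ (M : Set ↥(baireOne X)), {x : X | (f : X → ℝ) x = 0}) = ∅ := by
  obtain ⟨f, hfB, hfc⟩ := h
  rw [continuous_iff_continuousAt] at hfc
  push_neg at hfc
  obtain ⟨p, hp⟩ := hfc
  rw [ContinuousAt, Metric.tendsto_nhds] at hp
  push_neg at hp
  obtain ⟨ε, hε, hfreq⟩ := hp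
  have hfreq : ∃ᶠ x in 𝓝 p, ¬ dist (f x) (f p) < ε := hfreq.mono fun x hx => not_lt.mpr hx
  have hkey : ∀ N ∈ 𝓝 p, ∃ x ∈ N, ε ≤ dist (f x) (f p) := by
    intro N hN
    obtain ⟨x, hxN, hx⟩ := Filter.frequently_iff.mp hfreq hN
    exact ⟨x, hxN, not_lt.mp hx⟩
  -- the auxiliary Baire one function g
  set g : X → ℝ := fun x => min (dist (f x) (f p)) ε with hg
  have hgB : g ∈ baireOne X := by
    obtain ⟨F, hF⟩ := hfB
    refine ⟨fun n => ⟨fun x => min (dist (F n x) (f p)) ε, by fun_prop⟩, fun x => ?_⟩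
    exact ((hF x).dist tendsto_const_nhds).min tendsto_const_nhds
  have hgle : ∀ x, g x ≤ ε := fun x => min_le_right _ _
  have hgp : g p = 0 := by simp [hg, hε.le]
  have hgε : ∀ N ∈ 𝓝 p, ∃ x ∈ N, g x = ε := by
    intro N hN
    obtain ⟨x, hxN, hx⟩ := hkey N hN
    exact ⟨x, hxN, min_eq_right hx⟩
  -- for each neighborhood W of p, a function φ with zero set inside W ∩ {g = ε},
  -- but containing N ∩ {g = ε} for some neighborhood N of p
  have hφ : ∀ W ∈ 𝓝 p, ∃ φ : ↥(baireOne X),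
      (∀ x, (φ : X → ℝ) x = 0 → x ∈ W ∧ g x = ε) ∧
      (∃ N ∈ 𝓝 p, ∀ x ∈ N, g x = ε → (φ : X → ℝ) x = 0) := by
    intro W hW
    obtain ⟨V₁, hV₁n, hV₁c, hV₁W⟩ := exists_mem_nhds_isClosed_subset hW
    obtain ⟨V₂, hV₂n, hV₂c, hV₂sub⟩ :=
      exists_mem_nhds_isClosed_subset (interior_mem_nhds.mpr hV₁n)
    obtain ⟨k, hk0, hk1, hk01⟩ := exists_continuous_zero_one_of_isClosed
      (isOpen_interior.isClosed_compl) hV₂c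
      (Set.disjoint_left.mpr fun x hx hx2 => hx (hV₂sub hx2))
    have hmem : (fun x => (ε - g x) + (1 - k x)) ∈ baireOne X := by
      have : (fun x => (ε - g x) + (1 - k x)) =
          ((fun _ => ε) - g) + ((fun _ => (1:ℝ)) - (k : X → ℝ)) := rfl
      rw [this]
      exact add_mem (sub_mem (continuous_mem_baireOne continuous_const) hgB)
        (sub_mem (continuous_mem_baireOne continuous_const)
          (continuous_mem_baireOne k.continuous))
    refine ⟨⟨_, hmem⟩, fun x hx => ?_, V₂, hV₂n, fun x hxV hgx => ?_⟩
    · have h1 : g x ≤ ε := hgle x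
      have h2 : k x ≤ 1 := (hk01 x).2
      have hgxε : g x = ε := by
        simp only at hx; nlinarith
      have hkx : k x = 1 := by
        simp only at hx; nlinarith
      refine ⟨hV₁W ?_, hgxε⟩
      by_contra hxV₁
      have : x ∈ (interior V₁)ᶜ := fun hxi => hxV₁ (interior_subset hxi)
      have := hk0 this
      simp only [ContinuousMap.coe_coe, Pi.zero_apply] at this
      rw [this] at hkx; norm_num at hkx
    · have := hk1 hxV
      simp only [ContinuousMap.coe_coe, Pi.one_apply] at this
      show (ε - g x) + (1 - k x) = 0
      rw [hgx, this]; ring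
  -- the free proper ideal
  set I : Ideal ↥(baireOne X) :=
    { carrier := {h | ∃ N ∈ 𝓝 p, ∀ x ∈ N, g x = ε → (h : X → ℝ) x = 0}
      add_mem' := by
        rintro a b ⟨N₁, hN₁, h₁⟩ ⟨N₂, hN₂, h₂⟩
        refine ⟨N₁ ∩ N₂, Filter.inter_mem hN₁ hN₂, fun x hx hgx => ?_⟩
        show (a : X → ℝ) x + (b : X → ℝ) x = 0
        rw [h₁ x hx.1 hgx, h₂ x hx.2 hgx]; ring
      zero_mem' := ⟨Set.univ, Filter.univ_mem, fun x _ _ => rfl⟩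
      smul_mem' := by
        rintro r a ⟨N, hN, h₁⟩
        refine ⟨N, hN, fun x hx hgx => ?_⟩
        show (r : X → ℝ) x * (a : X → ℝ) x = 0
        rw [h₁ x hx hgx]; ring } with hI
  have hIproper : I ≠ ⊤ := by
    intro htop
    have h1 : (1 : ↥(baireOne X)) ∈ I := htop ▸ Submodule.mem_top
    obtain ⟨N, hN, hone⟩ := h1
    obtain ⟨x, hxN, hgx⟩ := hgε N hN
    have := hone x hxN hgx
    norm_num at this
  obtain ⟨M, hM, hIM⟩ := Ideal.exists_le_maximal I hIproper
  refine ⟨M, hM, ?_⟩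
  rw [Set.eq_empty_iff_forall_notMem]
  intro x hx
  simp only [Set.mem_iInter, Set.mem_setOf_eq] at hx
  by_cases hxp : x = p
  · obtain ⟨φ, hφ₁, hφ₂⟩ := hφ Set.univ Filter.univ_mem
    have hφI : φ ∈ I := hφ₂
    have := (hφ₁ x (hx φ (hIM hφI))).2
    rw [hxp, hgp] at this
    exact absurd this.symm (ne_of_gt hε)
  · obtain ⟨U, V, hUo, hVo, hpU, hxV, hUV⟩ := t2_separation (Ne.symm hxp)
    obtain ⟨φ, hφ₁, hφ₂⟩ := hφ U (hUo.mem_nhds hpU)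
    have hφI : φ ∈ I := hφ₂
    have hxU := (hφ₁ x (hx φ (hIM hφI))).1
    exact Set.disjoint_left.mp hUV hxU hxV
end
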